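/- Fix integers m ≥ 1 and k_1, ..., k_m with each k_i ≥ 2, and set n = k_1 + ... + k_m. Then for the graph G = D_n(k_1, ..., k_m), the set Shed(G) is not a dominating set of G. -/
import Mathlib


open scoped Classical

variable {V : Type*}

/-- `S` is an independent set of the induced subgraph of `G` on the vertex set `A`. -/
def IsIndepIn (G : SimpleGraph V) (A S : Finset V) : Prop :=
  S ⊆ A ∧ ∀ u ∈ S, ∀ v ∈ S, ¬ G.Adj u v

/-- `S` is a maximal independent set of the induced subgraph of `G` on the vertex set `A`. -/
def IsMaxIndepIn (G : SimpleGraph V) (A S : Finset V) : Prop :=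
  IsIndepIn G A S ∧ ∀ T, IsIndepIn G A T → S ⊆ T → T = S

/-- The induced subgraph of `G` on the vertex set `A` is well-covered: all of its
maximal independent sets have the same cardinality. -/
def WellCoveredOn (G : SimpleGraph V) (A : Finset V) : Prop :=
  ∀ S T, IsMaxIndepIn G A S → IsMaxIndepIn G A T → S.card = T.card

/-- The closed neighbourhood of `x` deleted from `A`: the vertices of `A` distinct from `x`
and not adjacent to `x`. -/
noncomputable def delClosedNbhd (G : SimpleGraph V) (A : Finset V) (x : V) : Finset V :=
  A.filter fun y => y ≠ x ∧ ¬ G.Adj x y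

/-- The induced subgraph of `G` on the vertex set `A` is vertex decomposable: it is
well-covered, and either it has no edges, or some vertex `x ∈ A` is such that deleting `x`,
respectively the closed neighbourhood of `x`, leaves a vertex decomposable graph. -/
def VertexDecomposableOn (G : SimpleGraph V) (A : Finset V) : Prop :=
  WellCoveredOn G A ∧
    ((∀ u ∈ A, ∀ v ∈ A, ¬ G.Adj u v) ∨
      ∃ x, ∃ _h : x ∈ A,
        VertexDecomposableOn G (A.erase x) ∧
        VertexDecomposableOn G (delClosedNbhd G A x))
termination_by A.card
decreasing_by
  · exact Finset.card_erase_lt_of_mem (by assumption)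
  · exact Finset.card_lt_card
      (Finset.filter_ssubset.mpr ⟨x, by assumption, by simp⟩)

/-- A finite simple graph is well-covered if all of its maximal independent sets have the
same cardinality. -/
def WellCovered (G : SimpleGraph V) [Fintype V] : Prop :=
  WellCoveredOn G Finset.univ

/-- A finite simple graph is vertex decomposable. -/
def VertexDecomposable (G : SimpleGraph V) [Fintype V] : Prop :=
  VertexDecomposableOn G Finset.univ

/-- The set of shedding vertices of `G` : those vertices `x` such that both `G \ x` and
`G \ N[x]` are vertex decomposable. -/
def Shed (G : SimpleGraph V) [Fintype V] : Set V :=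
  {x | VertexDecomposableOn G (Finset.univ.erase x) ∧
       VertexDecomposableOn G (delClosedNbhd G Finset.univ x)}

/-- `D` is a dominating set of `G`: every vertex not in `D` is adjacent to a vertex of `D`. -/
def IsDominatingSet (G : SimpleGraph V) (D : Set V) : Prop :=
  ∀ v, v ∉ D → ∃ u ∈ D, G.Adj u v

/-- A vertex is simplicial if its neighbourhood induces a clique. -/
def IsSimplicialVertex (G : SimpleGraph V) (x : V) : Prop :=
  ∀ u v, G.Adj x u → G.Adj x v → u ≠ v → G.Adj u v

/-- The (0-indexed) vertices `a` and `b` of `X` lie in the same complete bipartite block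
`K_{k i, k i}`: block `i` occupies the indices in `[2 * (k 0 + ⋯ + k (i-1)), 2 * (k 0 + ⋯ + k i))`. -/
def SameBlock (m : ℕ) (k : ℕ → ℕ) (a b : ℕ) : Prop :=
  ∃ i < m, 2 * (∑ j ∈ Finset.range i, k j) ≤ a ∧ a < 2 * (∑ j ∈ Finset.range (i + 1), k j) ∧
           2 * (∑ j ∈ Finset.range i, k j) ≤ b ∧ b < 2 * (∑ j ∈ Finset.range (i + 1), k j)

/-- The graph `D_n(k 0, …, k (m-1))` on the `5n` vertices `X ⊕ Y ⊕ Z` (all 0-indexed, so the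
paper's `x_j` is `Sum.inl (j-1)`, `y_j` is `Sum.inr (Sum.inl (j-1))` and `z_j` is
`Sum.inr (Sum.inr (j-1))`).  Its edges are exactly: `Z` induces a complete graph `K n`;
`Y` is independent; `X` induces the disjoint union `K_{k 0,k 0} ⊔ ⋯ ⊔ K_{k (m-1),k (m-1)}`,
where within each block the bipartition is by the parity of the index; `x_j` is adjacent to
`y_j`; and `z_c` is adjacent to `y_{2c}` and `y_{2c+1}`. -/
def Dgraph (m : ℕ) (k : ℕ → ℕ) (n : ℕ) :
    SimpleGraph (Fin (2 * n) ⊕ Fin (2 * n) ⊕ Fin n) :=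
  SimpleGraph.fromRel fun p q =>
    match p, q with
    | Sum.inl a, Sum.inl b => SameBlock m k a.val b.val ∧ a.val % 2 ≠ b.val % 2
    | Sum.inl a, Sum.inr (Sum.inl b) => a.val = b.val
    | Sum.inr (Sum.inr c), Sum.inr (Sum.inl b) => b.val = 2 * c.val ∨ b.val = 2 * c.val + 1
    | Sum.inr (Sum.inr c), Sum.inr (Sum.inr d) => c ≠ d
    | _, _ => False

lemma sameBlock_symm {m k} {a b : ℕ} (h : SameBlock m k a b) : SameBlock m k b a := by
  obtain ⟨i, hi, h1, h2, h3, h4⟩ := h; exact ⟨i, hi, h3, h4, h1, h2⟩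

lemma adj_xx {m k n} {a b : Fin (2*n)} :
    (Dgraph m k n).Adj (.inl a) (.inl b) ↔
      (SameBlock m k a b ∧ a.val % 2 ≠ b.val % 2) := by
  simp only [Dgraph, SimpleGraph.fromRel_adj]
  constructor
  · rintro ⟨-, h | h⟩
    · exact h
    · exact ⟨sameBlock_symm h.1, fun e => h.2 e.symm⟩
  · intro h
    refine ⟨fun e => ?_, Or.inl h⟩
    cases e
    exact h.2 rfl

lemma adj_xy {m k n} {a b : Fin (2*n)} :
    (Dgraph m k n).Adj (.inl a) (.inr (.inl b)) ↔ a.val = b.val := by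
  simp only [Dgraph, SimpleGraph.fromRel_adj]
  constructor
  · rintro ⟨-, h | h⟩
    · exact h
    · exact h.elim
  · intro h; exact ⟨by simp, Or.inl h⟩

lemma adj_xz {m k n} {a : Fin (2*n)} {c : Fin n} :
    ¬ (Dgraph m k n).Adj (.inl a) (.inr (.inr c)) := by
  simp only [Dgraph, SimpleGraph.fromRel_adj]
  rintro ⟨-, h | h⟩ <;> exact h

lemma adj_yy {m k n} {a b : Fin (2*n)} :
    ¬ (Dgraph m k n).Adj (.inr (.inl a)) (.inr (.inl b)) := by
  simp only [Dgraph, SimpleGraph.fromRel_adj]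
  rintro ⟨-, h | h⟩ <;> exact h

lemma adj_yz {m k n} {b : Fin (2*n)} {c : Fin n} :
    (Dgraph m k n).Adj (.inr (.inl b)) (.inr (.inr c)) ↔
      (b.val = 2 * c.val ∨ b.val = 2 * c.val + 1) := by
  simp only [Dgraph, SimpleGraph.fromRel_adj]
  constructor
  · rintro ⟨-, h | h⟩
    · exact h.elim
    · exact h
  · intro h; exact ⟨by simp, Or.inr h⟩

lemma adj_zz {m k n} {c d : Fin n} :
    (Dgraph m k n).Adj (.inr (.inr c)) (.inr (.inr d)) ↔ c ≠ d := by
  simp only [Dgraph, SimpleGraph.fromRel_adj]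
  constructor
  · rintro ⟨-, h | h⟩
    · exact h
    · exact h.symm
  · intro h; exact ⟨by simp [h], Or.inl h⟩

lemma block_exists' (m : ℕ) (k : ℕ → ℕ) :
    ∀ t, t < ∑ j ∈ Finset.range m, k j →
      ∃ i < m, (∑ j ∈ Finset.range i, k j) ≤ t ∧ t < ∑ j ∈ Finset.range (i+1), k j := by
  induction m with
  | zero => simp
  | succ m ih =>
    intro t ht
    by_cases h : t < ∑ j ∈ Finset.range m, k j
    · obtain ⟨i, hi, h1, h2⟩ := ih t h
      exact ⟨i, Nat.lt_succ_of_lt hi, h1, h2⟩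
    · exact ⟨m, Nat.lt_succ_self m, Nat.le_of_not_lt h, ht⟩

/-- every index `j < 2n` has, in its own block, two distinct indices of the opposite
parity; in particular one of them differs from any prescribed value `a`. -/
lemma exists_partner (m : ℕ) (k : ℕ → ℕ) (hk : ∀ i < m, 2 ≤ k i) (n : ℕ)
    (hn : n = ∑ i ∈ Finset.range m, k i) (j : ℕ) (hj : j < 2 * n) (a : ℕ) :
    ∃ j', j' < 2 * n ∧ SameBlock m k j j' ∧ j' % 2 ≠ j % 2 ∧ j' ≠ a := by
  have ht : j / 2 < ∑ jj ∈ Finset.range m, k jj := by omega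
  obtain ⟨i, him, h1, h2⟩ := block_exists' m k (j / 2) ht
  set s := ∑ jj ∈ Finset.range i, k jj with hs
  have hs' : ∑ jj ∈ Finset.range (i+1), k jj = s + k i := by
    rw [Finset.sum_range_succ]
  have hki : 2 ≤ k i := hk i him
  have hjlo : 2 * s ≤ j := by omega
  have hjhi : j < 2 * (s + k i) := by omega
  -- two candidates of opposite parity: 2s + (1 - j % 2) and that + 2
  have hp : j % 2 < 2 := Nat.mod_lt _ (by norm_num)
  set c1 := 2 * s + (1 - j % 2) with hc1
  have hcands : ∀ c, c = c1 ∨ c = c1 + 2 →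
      c < 2 * n ∧ SameBlock m k j c ∧ c % 2 ≠ j % 2 := by
    intro c hc
    have hcn : c < 2 * (s + k i) := by omega
    have hsn : s + k i ≤ n := by
      rw [hn, ← hs']
      exact Finset.sum_le_sum_of_subset (Finset.range_subset_range.mpr him)
    refine ⟨by omega, ⟨i, him, by omega, by omega, by omega, by omega⟩, ?_⟩
    omega
  by_cases hca : c1 = a
  · obtain ⟨w1, w2, w3⟩ := hcands (c1 + 2) (Or.inr rfl)
    exact ⟨c1 + 2, w1, w2, w3, by omega⟩
  · obtain ⟨w1, w2, w3⟩ := hcands c1 (Or.inl rfl)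
    exact ⟨c1, w1, w2, w3, hca⟩

/-- the indices of a given parity `q`. -/
def pset (n q : ℕ) : Finset (Fin (2*n)) := Finset.univ.filter (fun j => j.val % 2 = q)

@[simp] lemma mem_pset {n q : ℕ} {j : Fin (2*n)} : j ∈ pset n q ↔ j.val % 2 = q := by
  simp [pset]

lemma card_pset (n : ℕ) {q : ℕ} (hq : q < 2) : (pset n q).card = n := by
  classical
  have h : (pset n q).card = (Finset.univ : Finset (Fin n)).card := by
    refine Finset.card_bij' (fun j _ => (⟨j.val / 2, by omega⟩ : Fin n))
      (fun c _ => (⟨2 * c.val + q, by omega⟩ : Fin (2*n))) ?_ ?_ ?_ ?_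
    · intro a ha; exact Finset.mem_univ _
    · intro c hc; simp only [mem_pset]; omega
    · intro a ha
      have := (mem_pset).1 ha
      apply Fin.ext; simp only; omega
    · intro c hc; apply Fin.ext; simp only; omega
  simpa using h

def yinj (n : ℕ) : Fin (2*n) → (Fin (2*n) ⊕ Fin (2*n) ⊕ Fin n) := fun j => Sum.inr (Sum.inl j)

lemma yinj_injective (n : ℕ) : Function.Injective (yinj n) := by
  intro a b h; simpa [yinj] using h

/-- the big maximal independent set: all `x`'s of parity `q` and all `y`'s of parity `1-q`. -/
def Tset (n q : ℕ) : Finset (Fin (2*n) ⊕ Fin (2*n) ⊕ Fin n) :=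
  (pset n q).image Sum.inl ∪ (pset n (1-q)).image (yinj n)

@[simp] lemma x_mem_Tset {n q : ℕ} {j : Fin (2*n)} :
    Sum.inl j ∈ Tset n q ↔ j.val % 2 = q := by simp [Tset, yinj]

@[simp] lemma y_mem_Tset {n q : ℕ} {j : Fin (2*n)} :
    (Sum.inr (Sum.inl j) : Fin (2*n) ⊕ Fin (2*n) ⊕ Fin n) ∈ Tset n q ↔ j.val % 2 = 1 - q := by
  simp [Tset, yinj]

@[simp] lemma z_mem_Tset {n q : ℕ} {c : Fin n} :
    ((Sum.inr (Sum.inr c)) : Fin (2*n) ⊕ Fin (2*n) ⊕ Fin n) ∉ Tset n q := by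
  simp [Tset, yinj]

lemma card_Tset (n : ℕ) {q : ℕ} (hq : q < 2) : (Tset n q).card = 2 * n := by
  rw [Tset, Finset.card_union_of_disjoint, Finset.card_image_of_injective _ Sum.inl_injective,
    Finset.card_image_of_injective _ (yinj_injective n), card_pset n hq, card_pset n (by omega)]
  · omega
  · simp [Finset.disjoint_left, yinj]

/-- the small maximal independent set used for `u = xₐ` (where `q = a % 2`,
`c = a / 2`, `pa` is the partner `2*(a/2) + (1 - a%2)`). -/
def Sx (n q : ℕ) (a pa : Fin (2*n)) (c : Fin n) :
    Finset (Fin (2*n) ⊕ Fin (2*n) ⊕ Fin n) :=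
  {Sum.inr (Sum.inr c)} ∪ ((pset n q).erase a).image Sum.inl ∪
    ((pset n (1-q)).erase pa).image (yinj n)

@[simp] lemma x_mem_Sx {n q : ℕ} {a pa j : Fin (2*n)} {c : Fin n} :
    Sum.inl j ∈ Sx n q a pa c ↔ (j ≠ a ∧ j.val % 2 = q) := by simp [Sx, yinj]

@[simp] lemma y_mem_Sx {n q : ℕ} {a pa j : Fin (2*n)} {c : Fin n} :
    (Sum.inr (Sum.inl j) : Fin (2*n) ⊕ Fin (2*n) ⊕ Fin n) ∈ Sx n q a pa c ↔
      (j ≠ pa ∧ j.val % 2 = 1 - q) := by simp [Sx, yinj]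

@[simp] lemma z_mem_Sx {n q : ℕ} {a pa : Fin (2*n)} {c e : Fin n} :
    (Sum.inr (Sum.inr e) : Fin (2*n) ⊕ Fin (2*n) ⊕ Fin n) ∈ Sx n q a pa c ↔ e = c := by
  simp [Sx, yinj]

lemma card_Sx {n q : ℕ} (hq : q < 2) {a pa : Fin (2*n)} {c : Fin n}
    (ha : a.val % 2 = q) (hpa : pa.val % 2 = 1 - q) :
    (Sx n q a pa c).card = 2 * n - 1 := by
  have h2 : 1 ≤ n := by omega
  rw [Sx, Finset.card_union_of_disjoint, Finset.card_union_of_disjoint,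
    Finset.card_image_of_injective _ Sum.inl_injective,
    Finset.card_image_of_injective _ (yinj_injective n),
    Finset.card_erase_of_mem (by simpa using ha),
    Finset.card_erase_of_mem (by simpa using hpa),
    card_pset n hq, card_pset n (by omega : 1 - q < 2), Finset.card_singleton]
  · omega
  · simp [Finset.disjoint_left, yinj]
  · simp [Finset.disjoint_left, yinj]

/-- the small maximal independent set used for `u = y_b` (where `q = b % 2`,
`d ≠ b/2` and `w = 2*d + q`). -/
def Sy (n q : ℕ) (b w : Fin (2*n)) (d : Fin n) :
    Finset (Fin (2*n) ⊕ Fin (2*n) ⊕ Fin n) :=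
  {Sum.inr (Sum.inr d)} ∪ (pset n (1-q)).image Sum.inl ∪
    (((pset n q).erase b).erase w).image (yinj n)

@[simp] lemma x_mem_Sy {n q : ℕ} {b w j : Fin (2*n)} {d : Fin n} :
    Sum.inl j ∈ Sy n q b w d ↔ j.val % 2 = 1 - q := by simp [Sy, yinj]

@[simp] lemma y_mem_Sy {n q : ℕ} {b w j : Fin (2*n)} {d : Fin n} :
    (Sum.inr (Sum.inl j) : Fin (2*n) ⊕ Fin (2*n) ⊕ Fin n) ∈ Sy n q b w d ↔
      (j ≠ w ∧ j ≠ b ∧ j.val % 2 = q) := by simp [Sy, yinj]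

@[simp] lemma z_mem_Sy {n q : ℕ} {b w : Fin (2*n)} {d e : Fin n} :
    (Sum.inr (Sum.inr e) : Fin (2*n) ⊕ Fin (2*n) ⊕ Fin n) ∈ Sy n q b w d ↔ e = d := by
  simp [Sy, yinj]

lemma card_Sy {n q : ℕ} (hn2 : 2 ≤ n) (hq : q < 2) {b w : Fin (2*n)} {d : Fin n}
    (hb : b.val % 2 = q) (hw : w.val % 2 = q) (hbw : w ≠ b) :
    (Sy n q b w d).card = 2 * n - 1 := by
  have h2 : 1 ≤ n := by omega
  rw [Sy, Finset.card_union_of_disjoint, Finset.card_union_of_disjoint,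
    Finset.card_image_of_injective _ Sum.inl_injective,
    Finset.card_image_of_injective _ (yinj_injective n),
    Finset.card_erase_of_mem (by simp [hw, hbw]),
    Finset.card_erase_of_mem (by simpa using hb),
    card_pset n hq, card_pset n (by omega : 1 - q < 2), Finset.card_singleton]
  · omega
  · simp [Finset.disjoint_left, yinj]
  · simp [Finset.disjoint_left, yinj]

lemma isMaxIndep_Tset (m : ℕ) (k : ℕ → ℕ) (hk : ∀ i < m, 2 ≤ k i) (n : ℕ)
    (hn : n = ∑ i ∈ Finset.range m, k i) {q : ℕ} (hq : q < 2)
    {u : Fin (2*n) ⊕ Fin (2*n) ⊕ Fin n} (hu : u ∉ Tset n q) :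
    IsMaxIndepIn (Dgraph m k n) (Finset.univ.erase u) (Tset n q) := by
  constructor
  · constructor
    · intro v hv
      exact Finset.mem_erase.mpr ⟨fun e => hu (e ▸ hv), Finset.mem_univ _⟩
    · rintro (j | j | c) hv (j' | j' | c') hw hadj
      · have h1 := x_mem_Tset.1 hv
        have h2 := x_mem_Tset.1 hw
        exact (adj_xx.1 hadj).2 (h1.trans h2.symm)
      · have h1 := x_mem_Tset.1 hv
        have h2 := y_mem_Tset.1 hw
        have := adj_xy.1 hadj
        omega
      · exact (z_mem_Tset hw).elim
      · have h1 := y_mem_Tset.1 hv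
        have h2 := x_mem_Tset.1 hw
        have := adj_xy.1 hadj.symm
        omega
      · exact adj_yy hadj
      · exact (z_mem_Tset hw).elim
      · exact (z_mem_Tset hv).elim
      · exact (z_mem_Tset hv).elim
      · exact (z_mem_Tset hv).elim
  · intro T hT hST
    refine Finset.Subset.antisymm (fun v hv => ?_) hST
    by_contra hvS
    rcases v with j | j | c
    · have hj : j.val % 2 = 1 - q := by
        have h0 : ¬ (j.val % 2 = q) := fun h => hvS (x_mem_Tset.2 h); omega
      obtain ⟨j', hj't, hsb, hpar, -⟩ :=
        exists_partner m k hk n hn j.val j.isLt (2*n)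
      have hj'q : j' % 2 = q := by omega
      have hval : ((⟨j', hj't⟩ : Fin (2*n))).val = j' := rfl
      have hmem : (Sum.inl (⟨j', hj't⟩ : Fin (2*n)) :
          Fin (2*n) ⊕ Fin (2*n) ⊕ Fin n) ∈ T :=
        hST (x_mem_Tset.2 (by omega))
      exact hT.2 _ hv _ hmem (adj_xx.2 ⟨by rw [hval]; exact hsb, by omega⟩)
    · have hj : j.val % 2 = q := by
        have h0 : ¬ (j.val % 2 = 1 - q) := fun h => hvS (y_mem_Tset.2 h); omega
      have hmem : (Sum.inl j : Fin (2*n) ⊕ Fin (2*n) ⊕ Fin n) ∈ T :=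
        hST (x_mem_Tset.2 hj)
      exact hT.2 _ hmem _ hv (adj_xy.2 rfl)
    · have hmem : (Sum.inr (Sum.inl (⟨2*c.val + (1-q), by omega⟩ : Fin (2*n))) :
          Fin (2*n) ⊕ Fin (2*n) ⊕ Fin n) ∈ T :=
        hST (y_mem_Tset.2 (by simp only; omega))
      exact hT.2 _ hmem _ hv (adj_yz.2 (by simp only; omega))

lemma isMaxIndep_Sx (m : ℕ) (k : ℕ → ℕ) (hk : ∀ i < m, 2 ≤ k i) (n : ℕ)
    (hn : n = ∑ i ∈ Finset.range m, k i) {q : ℕ} (hq : q < 2)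
    {a pa : Fin (2*n)} {c : Fin n} (ha : a.val % 2 = q)
    (hpa : pa.val = 2 * (a.val / 2) + (1 - q)) (hc : c.val = a.val / 2) :
    IsMaxIndepIn (Dgraph m k n) (Finset.univ.erase (Sum.inl a)) (Sx n q a pa c) := by
  constructor
  · constructor
    · rintro (j | j | e) hv <;> refine Finset.mem_erase.mpr ⟨?_, Finset.mem_univ _⟩
      · have := (x_mem_Sx.1 hv).1
        simpa using this
      · simp
      · simp
    · rintro (j | j | e) hv (j' | j' | e') hw hadj
      · have h1 := (x_mem_Sx.1 hv).2
        have h2 := (x_mem_Sx.1 hw).2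
        exact (adj_xx.1 hadj).2 (h1.trans h2.symm)
      · have h1 := (x_mem_Sx.1 hv).2
        have h2 := (y_mem_Sx.1 hw).2
        have := adj_xy.1 hadj
        omega
      · exact adj_xz hadj
      · have h1 := (y_mem_Sx.1 hv).2
        have h2 := (x_mem_Sx.1 hw).2
        have := adj_xy.1 hadj.symm
        omega
      · exact adj_yy hadj
      · -- y adjacent to z: the z is c, the y must be pa, excluded
        have h1 := (y_mem_Sx.1 hv).1
        have h2 := (y_mem_Sx.1 hv).2
        have he := z_mem_Sx.1 hw
        have := adj_yz.1 hadj
        rw [he] at this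
        exact h1 (Fin.ext (by omega))
      · exact adj_xz hadj.symm
      · have h1 := (y_mem_Sx.1 hw).1
        have h2 := (y_mem_Sx.1 hw).2
        have he := z_mem_Sx.1 hv
        have := adj_yz.1 hadj.symm
        rw [he] at this
        exact h1 (Fin.ext (by omega))
      · have h1 := z_mem_Sx.1 hv
        have h2 := z_mem_Sx.1 hw
        exact (adj_zz.1 hadj) (h1.trans h2.symm)
  · intro T hT hST
    refine Finset.Subset.antisymm (fun v hv => ?_) hST
    by_contra hvS
    have hvA := hT.1 hv
    rcases v with j | j | e
    · have hja : j ≠ a := by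
        have := (Finset.mem_erase.1 hvA).1
        simpa using this
      have hj : ¬ (j.val % 2 = q) := fun h => hvS (x_mem_Sx.2 ⟨hja, h⟩)
      obtain ⟨j', hj't, hsb, hpar, hj'a⟩ :=
        exists_partner m k hk n hn j.val j.isLt a.val
      have hval : ((⟨j', hj't⟩ : Fin (2*n))).val = j' := rfl
      have hmem : (Sum.inl (⟨j', hj't⟩ : Fin (2*n)) :
          Fin (2*n) ⊕ Fin (2*n) ⊕ Fin n) ∈ T :=
        hST (x_mem_Sx.2 ⟨fun e => by rw [← e, hval] at hj'a; exact hj'a rfl, by omega⟩)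
      exact hT.2 _ hv _ hmem (adj_xx.2 ⟨by rw [hval]; exact hsb, by omega⟩)
    · have hzc : (Sum.inr (Sum.inr c) : Fin (2*n) ⊕ Fin (2*n) ⊕ Fin n) ∈ T :=
        hST (z_mem_Sx.2 rfl)
      by_cases hj : j.val % 2 = q
      · by_cases hja : j = a
        · -- y_a is adjacent to z_c
          exact hT.2 _ hv _ hzc (adj_yz.2 (by omega))
        · -- x_j is in Sx and adjacent to y_j
          have hmem : (Sum.inl j : Fin (2*n) ⊕ Fin (2*n) ⊕ Fin n) ∈ T :=
            hST (x_mem_Sx.2 ⟨hja, hj⟩)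
          exact hT.2 _ hmem _ hv (adj_xy.2 rfl)
      · by_cases hjpa : j = pa
        · -- y_pa is adjacent to z_c
          subst hjpa
          exact hT.2 _ hv _ hzc (adj_yz.2 (by omega))
        · exact hvS (y_mem_Sx.2 ⟨hjpa, by omega⟩)
    · have he : e ≠ c := fun h => hvS (z_mem_Sx.2 h)
      have hzc : (Sum.inr (Sum.inr c) : Fin (2*n) ⊕ Fin (2*n) ⊕ Fin n) ∈ T :=
        hST (z_mem_Sx.2 rfl)
      exact hT.2 _ hv _ hzc (adj_zz.2 he)

lemma isMaxIndep_Sy (m : ℕ) (k : ℕ → ℕ) (hk : ∀ i < m, 2 ≤ k i) (n : ℕ)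
    (hn : n = ∑ i ∈ Finset.range m, k i) {q : ℕ} (hq : q < 2)
    {b w : Fin (2*n)} {d : Fin n} (hb : b.val % 2 = q)
    (hw : w.val = 2 * d.val + q) :
    IsMaxIndepIn (Dgraph m k n) (Finset.univ.erase (Sum.inr (Sum.inl b)))
      (Sy n q b w d) := by
  constructor
  · constructor
    · rintro (j | j | e) hv <;> refine Finset.mem_erase.mpr ⟨?_, Finset.mem_univ _⟩
      · simp
      · have := (y_mem_Sy.1 hv).2.1
        simpa using this
      · simp
    · rintro (j | j | e) hv (j' | j' | e') hw' hadj
      · have h1 := x_mem_Sy.1 hv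
        have h2 := x_mem_Sy.1 hw'
        exact (adj_xx.1 hadj).2 (h1.trans h2.symm)
      · have h1 := x_mem_Sy.1 hv
        have h2 := (y_mem_Sy.1 hw').2.2
        have := adj_xy.1 hadj
        omega
      · exact adj_xz hadj
      · have h1 := (y_mem_Sy.1 hv).2.2
        have h2 := x_mem_Sy.1 hw'
        have := adj_xy.1 hadj.symm
        omega
      · exact adj_yy hadj
      · have h1 := (y_mem_Sy.1 hv).1
        have h2 := (y_mem_Sy.1 hv).2.2
        have he := z_mem_Sy.1 hw'
        have := adj_yz.1 hadj
        rw [he] at this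
        exact h1 (Fin.ext (by omega))
      · exact adj_xz hadj.symm
      · have h1 := (y_mem_Sy.1 hw').1
        have h2 := (y_mem_Sy.1 hw').2.2
        have he := z_mem_Sy.1 hv
        have := adj_yz.1 hadj.symm
        rw [he] at this
        exact h1 (Fin.ext (by omega))
      · have h1 := z_mem_Sy.1 hv
        have h2 := z_mem_Sy.1 hw'
        exact (adj_zz.1 hadj) (h1.trans h2.symm)
  · intro T hT hST
    refine Finset.Subset.antisymm (fun v hv => ?_) hST
    by_contra hvS
    have hvA := hT.1 hv
    rcases v with j | j | e
    · have hj : ¬ (j.val % 2 = 1 - q) := fun h => hvS (x_mem_Sy.2 h)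
      obtain ⟨j', hj't, hsb, hpar, -⟩ :=
        exists_partner m k hk n hn j.val j.isLt (2*n)
      have hval : ((⟨j', hj't⟩ : Fin (2*n))).val = j' := rfl
      have hmem : (Sum.inl (⟨j', hj't⟩ : Fin (2*n)) :
          Fin (2*n) ⊕ Fin (2*n) ⊕ Fin n) ∈ T :=
        hST (x_mem_Sy.2 (by omega))
      exact hT.2 _ hv _ hmem (adj_xx.2 ⟨by rw [hval]; exact hsb, by omega⟩)
    · have hjb : j ≠ b := by
        have := (Finset.mem_erase.1 hvA).1
        simpa using this
      have hzd : (Sum.inr (Sum.inr d) : Fin (2*n) ⊕ Fin (2*n) ⊕ Fin n) ∈ T :=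
        hST (z_mem_Sy.2 rfl)
      by_cases hj : j.val % 2 = q
      · by_cases hjw : j = w
        · subst hjw
          exact hT.2 _ hv _ hzd (adj_yz.2 (by omega))
        · exact hvS (y_mem_Sy.2 ⟨hjw, hjb, hj⟩)
      · have hmem : (Sum.inl j : Fin (2*n) ⊕ Fin (2*n) ⊕ Fin n) ∈ T :=
          hST (x_mem_Sy.2 (by omega))
        exact hT.2 _ hmem _ hv (adj_xy.2 rfl)
    · have he : e ≠ d := fun h => hvS (z_mem_Sy.2 h)
      have hzd : (Sum.inr (Sum.inr d) : Fin (2*n) ⊕ Fin (2*n) ⊕ Fin n) ∈ T :=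
        hST (z_mem_Sy.2 rfl)
      exact hT.2 _ hv _ hzd (adj_zz.2 he)

lemma erase_eq_erase {α : Type*} (i1 i2 : DecidableEq α) (s : Finset α) (x : α) :
    @Finset.erase α i1 s x = @Finset.erase α i2 s x := by
  cases Subsingleton.elim i1 i2; rfl

lemma notWC_x (m : ℕ) (k : ℕ → ℕ) (hk : ∀ i < m, 2 ≤ k i) (n : ℕ)
    (hn : n = ∑ i ∈ Finset.range m, k i) (a : Fin (2*n)) :
    ¬ WellCoveredOn (Dgraph m k n) (Finset.univ.erase (Sum.inl a)) := by
  intro hwc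
  have hq : a.val % 2 < 2 := by omega
  have hS := isMaxIndep_Sx m k hk n hn hq
    (a := a) (pa := ⟨2 * (a.val / 2) + (1 - a.val % 2), by omega⟩)
    (c := ⟨a.val / 2, by omega⟩) rfl rfl rfl
  have hT := isMaxIndep_Tset m k hk n hn (q := 1 - a.val % 2) (by omega)
    (u := Sum.inl a) (by simp only [x_mem_Tset]; omega)
  have hcard := hwc _ _ hS hT
  rw [card_Sx hq rfl (by simp only; omega), card_Tset n (by omega)] at hcard
  omega

lemma notWC_y (m : ℕ) (k : ℕ → ℕ) (hk : ∀ i < m, 2 ≤ k i) (n : ℕ)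
    (hn : n = ∑ i ∈ Finset.range m, k i) (hn2 : 2 ≤ n) (b : Fin (2*n)) :
    ¬ WellCoveredOn (Dgraph m k n) (Finset.univ.erase (Sum.inr (Sum.inl b))) := by
  intro hwc
  have hq : b.val % 2 < 2 := by omega
  obtain ⟨dv, hdn, hdb⟩ : ∃ dv : ℕ, dv < n ∧ dv ≠ b.val / 2 := by
    by_cases h : b.val / 2 = 0
    · exact ⟨1, by omega, by omega⟩
    · exact ⟨0, by omega, fun e => h e.symm⟩
  have hS := isMaxIndep_Sy m k hk n hn hq
    (b := b) (w := ⟨2 * dv + b.val % 2, by omega⟩) (d := ⟨dv, hdn⟩) rfl rfl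
  have hT := isMaxIndep_Tset m k hk n hn (q := b.val % 2) hq
    (u := Sum.inr (Sum.inl b)) (by simp only [y_mem_Tset]; omega)
  have hcard := hwc _ _ hS hT
  rw [card_Sy hn2 hq rfl (by simp only; omega)
      (by intro e; exact hdb (by have := congrArg Fin.val e; simp only at this; omega)),
    card_Tset n hq] at hcard
  omega

/-- For the graph `D_n(k_1, …, k_m)`, the set of shedding vertices is not a
dominating set. -/
theorem statement14 (m : ℕ) (hm : 1 ≤ m) (k : ℕ → ℕ) (hk : ∀ i < m, 2 ≤ k i)
    (n : ℕ) (hn : n = ∑ i ∈ Finset.range m, k i) :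
    ¬ IsDominatingSet (Dgraph m k n) (Shed (Dgraph m k n)) := by
  intro hdom
  have hn2 : 2 ≤ n := by
    have h0 : 2 ≤ k 0 := hk 0 hm
    have h1 : k 0 ≤ ∑ i ∈ Finset.range m, k i :=
      Finset.single_le_sum (fun i _ => Nat.zero_le _) (Finset.mem_range.mpr hm)
    omega
  have notShed_x : ∀ a : Fin (2*n), Sum.inl a ∉ Shed (Dgraph m k n) := by
    intro a ha
    have h1 := ha.1
    rw [VertexDecomposableOn] at h1
    refine notWC_x m k hk n hn a ?_
    rw [erase_eq_erase _ (fun a b => Classical.propDecidable (a = b))]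
    exact h1.1
  have notShed_y : ∀ b : Fin (2*n),
      (Sum.inr (Sum.inl b) : Fin (2*n) ⊕ Fin (2*n) ⊕ Fin n) ∉ Shed (Dgraph m k n) := by
    intro b hb
    have h1 := hb.1
    rw [VertexDecomposableOn] at h1
    refine notWC_y m k hk n hn hn2 b ?_
    rw [erase_eq_erase _ (fun a b => Classical.propDecidable (a = b))]
    exact h1.1
  obtain ⟨u, huS, hadj⟩ :=
    hdom (Sum.inl (⟨0, by omega⟩ : Fin (2*n))) (notShed_x _)
  rcases u with a | b | c
  · exact notShed_x a huS
  · exact notShed_y b huS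
  · exact adj_xz hadj.symm
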